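/- For each natural number n, there exists a metric space C homeomorphic to the Cantor space {0,1}^ℕ such that every metric space with at most n points and diameter at most 1 admits an isometric embedding into C. -/

import Mathlib

noncomputable section
namespace CantorUniv

/-- weight of greedy steps -/
def w (m : ℕ) : ℝ := (3/4 : ℝ) ^ m

lemma w_pos (m : ℕ) : 0 < w m := by unfold w; positivity

lemma w_nonneg (m : ℕ) : 0 ≤ w m := (w_pos m).le

lemma w_succ (m : ℕ) : w (m+1) = (3/4) * w m := by
  simp [w, pow_succ]; ring

lemma w_antitone {m m' : ℕ} (h : m' ≤ m) : w m ≤ w m' :=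
  pow_le_pow_of_le_one (by norm_num) (by norm_num) h

lemma summable_w : Summable w := summable_geometric_of_lt_one (by norm_num) (by norm_num)

def sgn (b : Bool) : ℝ := cond b 1 (-1)

lemma abs_sgn (b : Bool) : |sgn b| = 1 := by cases b <;> simp [sgn]

/-- decode a bit stream into a real number -/
def dec (t : ℕ → Bool) : ℝ := ∑' m, sgn (t m) * w m

lemma summable_dec (t : ℕ → Bool) : Summable fun m => sgn (t m) * w m := by
  apply Summable.of_norm
  have h : ∀ m, ‖sgn (t m) * w m‖ = w m := by
    intro m; rw [norm_mul, Real.norm_eq_abs, Real.norm_eq_abs, abs_sgn, one_mul,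
      abs_of_nonneg (w_nonneg m)]
  simpa [h] using summable_w

/-- the geometric bound -/
def gb (P : ℕ) (p : ℕ) : ℝ := (2 / 3 ^ (P+1)) * (1/3) ^ p

lemma gb_eq (P p : ℕ) : gb P p = 2 / 3 ^ (p + P + 1) := by
  unfold gb
  rw [div_pow, one_pow, div_mul_div_comm, mul_one, ← pow_add]
  ring_nf

lemma summable_gb (P : ℕ) : Summable (gb P) :=
  (summable_geometric_of_lt_one (by norm_num) (by norm_num)).mul_left _

lemma tsum_gb (P : ℕ) : ∑' p, gb P p = (1/3) ^ P := by
  unfold gb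
  rw [tsum_mul_left, tsum_geometric_of_lt_one (by norm_num) (by norm_num)]
  rw [div_pow, one_pow, pow_succ]
  norm_num
  field_simp

/-- Cantor-function style injection value -/
def cval (x : ℕ → Bool) (p : ℕ) : ℝ := cond (x p) (2 / 3 ^ (p+1)) 0

lemma cval_abs_le (x : ℕ → Bool) (p : ℕ) : |cval x p| ≤ 2 / 3 ^ (p+1) := by
  cases h : x p <;> simp [cval, h]
  · positivity
  · rw [abs_of_nonneg (by positivity)]

lemma cval_sub_abs_le (x y : ℕ → Bool) (p : ℕ) : |cval x p - cval y p| ≤ 2 / 3 ^ (p+1) := by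
  cases hx : x p <;> cases hy : y p <;> simp [cval, hx, hy] <;>
    first
      | positivity
      | rw [abs_of_nonneg (by positivity)]

lemma summable_cval (x : ℕ → Bool) : Summable (cval x) := by
  apply Summable.of_norm
  apply Summable.of_nonneg_of_le (fun p => norm_nonneg _) (fun p => ?_) (summable_gb 0)
  rw [gb_eq, Real.norm_eq_abs]
  simpa using cval_abs_le x p

def cfun (x : ℕ → Bool) : ℝ := ∑' p, cval x p

/-- geometric tail bound -/
lemma geom_tail (u : ℕ → ℝ) (P : ℕ) (h : ∀ p, |u p| ≤ 2 / 3 ^ (p + P + 1)) :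
    |∑' p, u p| ≤ (1/3) ^ P := by
  have h' : ∀ p, ‖u p‖ ≤ gb P p := fun p => by
    rw [gb_eq, Real.norm_eq_abs]; exact h p
  have hn : Summable fun p => ‖u p‖ :=
    Summable.of_nonneg_of_le (fun p => norm_nonneg _) h' (summable_gb P)
  calc |∑' p, u p| ≤ ∑' p, ‖u p‖ := by
        rw [← Real.norm_eq_abs]; exact norm_tsum_le_tsum_norm hn
    _ ≤ ∑' p, gb P p := Summable.tsum_le_tsum h' hn (summable_gb P)
    _ = (1/3) ^ P := tsum_gb P

end CantorUniv

namespace CantorUniv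

lemma cfun_sub_le (x y : ℕ → Bool) (P : ℕ) (hag : ∀ p < P, x p = y p) :
    |cfun x - cfun y| ≤ (1/3) ^ P := by
  have hsub : Summable fun p => cval x p - cval y p :=
    (summable_cval x).sub (summable_cval y)
  have heq : cfun x - cfun y = ∑' p, (cval x p - cval y p) :=
    (Summable.tsum_sub (summable_cval x) (summable_cval y)).symm
  rw [heq, ← Summable.sum_add_tsum_nat_add P hsub]
  have hz : ∀ p ∈ Finset.range P, cval x p - cval y p = 0 := by
    intro p hp
    rw [Finset.mem_range] at hp
    simp [cval, hag p hp]
  rw [Finset.sum_eq_zero hz, zero_add]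
  apply geom_tail
  intro p
  exact cval_sub_abs_le x y (p + P)

lemma cfun_injective : Function.Injective cfun := by
  intro x y hxy
  by_contra hne
  have hne' : ∃ p, x p ≠ y p := by
    by_contra h
    push_neg at h
    exact hne (funext h)
  classical
  set p₀ := Nat.find hne' with hp₀def
  have hp₀ : x p₀ ≠ y p₀ := Nat.find_spec hne'
  have hlt : ∀ p < p₀, x p = y p := fun p hp => not_not.mp (Nat.find_min hne' hp)
  have hsub : Summable fun p => cval x p - cval y p :=
    (summable_cval x).sub (summable_cval y)
  have heq : (0:ℝ) = ∑' p, (cval x p - cval y p) := by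
    rw [Summable.tsum_sub (summable_cval x) (summable_cval y)]
    have h := hxy
    unfold cfun at h
    rw [h]
    ring
  rw [← Summable.sum_add_tsum_nat_add (p₀+1) hsub] at heq
  have hhead : ∑ p ∈ Finset.range (p₀+1), (cval x p - cval y p) = cval x p₀ - cval y p₀ := by
    rw [Finset.sum_range_succ]
    have hz : ∀ p ∈ Finset.range p₀, cval x p - cval y p = 0 := by
      intro p hp
      rw [Finset.mem_range] at hp
      simp [cval, hlt p hp]
    rw [Finset.sum_eq_zero hz, zero_add]
  rw [hhead] at heq
  have habs : |cval x p₀ - cval y p₀| = 2 / 3 ^ (p₀+1) := by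
    rcases Bool.eq_false_or_eq_true (x p₀) with hx | hx <;>
      rcases Bool.eq_false_or_eq_true (y p₀) with hy | hy <;>
        simp [hx, hy] at hp₀ ⊢ <;>
        simp [cval, hx, hy] <;>
        first
          | positivity
          | rw [abs_of_nonneg (by positivity)]
  have htail : |∑' p, (cval x (p + (p₀+1)) - cval y (p + (p₀+1)))| ≤ (1/3) ^ (p₀+1) := by
    apply geom_tail
    intro p
    exact cval_sub_abs_le x y (p + (p₀+1))
  have h1 : |cval x p₀ - cval y p₀| ≤ (1/3) ^ (p₀+1) := by
    have := abs_eq_abs.mpr (Or.inl (by linarith [heq] : cval x p₀ - cval y p₀ =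
      -(∑' p, (cval x (p + (p₀+1)) - cval y (p + (p₀+1))))))
    rw [this, abs_neg]
    exact htail
  rw [habs] at h1
  have : (1/3:ℝ) ^ (p₀+1) = 1 / 3 ^ (p₀+1) := by rw [div_pow, one_pow]
  rw [this] at h1
  have h3 : (0:ℝ) < 3 ^ (p₀+1) := by positivity
  rw [div_le_div_iff₀ h3 h3] at h1
  nlinarith

end CantorUniv

namespace CantorUniv

/-- the `k`-th interleaved bit stream -/
def stream (n : ℕ) (k : Fin (n+1)) (x : ℕ → Bool) : ℕ → Bool :=
  fun m => x (k.val + (n+1) * m)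

/-- the universal embedding map -/
def hmap (n : ℕ) (x : ℕ → Bool) : (Fin (n+1) → ℝ) × ℝ :=
  (fun k => dec (stream n k x), (1/(4*(n+1 : ℝ))) * cfun x)

lemma continuous_decStream (n : ℕ) (k : Fin (n+1)) :
    Continuous fun x : ℕ → Bool => dec (stream n k x) := by
  unfold dec stream
  refine continuous_tsum ?_ summable_w ?_
  · intro m
    exact ((continuous_of_discreteTopology (f := sgn)).comp
      (continuous_apply (k.val + (n+1) * m))).mul continuous_const
  · intro m x
    rw [norm_mul, Real.norm_eq_abs, Real.norm_eq_abs, abs_sgn, one_mul,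
      abs_of_nonneg (w_nonneg m)]

lemma continuous_cfun : Continuous cfun := by
  unfold cfun
  refine continuous_tsum ?_ (summable_gb 0) ?_
  · intro p
    exact (continuous_of_discreteTopology
      (f := fun b : Bool => cond b ((2:ℝ) / 3 ^ (p+1)) 0)).comp (continuous_apply p)
  · intro p x
    rw [Real.norm_eq_abs, gb_eq]
    simpa using cval_abs_le x p

lemma continuous_hmap (n : ℕ) : Continuous (hmap n) := by
  apply Continuous.prodMk
  · exact continuous_pi fun k => continuous_decStream n k
  · exact continuous_const.mul continuous_cfun

lemma injective_hmap (n : ℕ) : Function.Injective (hmap n) := by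
  intro x y hxy
  apply cfun_injective
  have h2 := congrArg Prod.snd hxy
  simp only [hmap] at h2
  have hc : (1/(4*(n+1 : ℝ))) ≠ 0 := by positivity
  exact mul_left_cancel₀ hc h2

/-- the Cantor space is homeomorphic to the range of `hmap n`. -/
def hmapHomeo (n : ℕ) : (ℕ → Bool) ≃ₜ ↥(Set.range (hmap n)) :=
  Topology.IsEmbedding.toHomeomorph ((continuous_hmap n).isClosedEmbedding (injective_hmap n)).toIsEmbedding

end CantorUniv

namespace CantorUniv

section Greedy

variable {K : Type} [MetricSpace K] [Fintype K] [LinearOrder K]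

/-- separation scales -/
def eps (n m : ℕ) : ℝ := w m / (4 * (n+1))

lemma eps_pos (n m : ℕ) : 0 < eps n m := by
  unfold eps
  apply div_pos (w_pos m)
  positivity

lemma eps_antitone (n : ℕ) {m m' : ℕ} (h : m' ≤ m) : eps n m ≤ eps n m' := by
  unfold eps
  gcongr
  exact w_antitone h

/-- the proximity graph at scale ε -/
def graph (K : Type) [MetricSpace K] (ε : ℝ) : SimpleGraph K where
  Adj a b := a ≠ b ∧ dist a b ≤ ε
  symm := ⟨fun a b h => ⟨h.1.symm, by rw [dist_comm]; exact h.2⟩⟩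
  loopless := ⟨fun a h => h.1 rfl⟩

/-- reachability at scale `eps n m` -/
def Rel (K : Type) [MetricSpace K] (n m : ℕ) (a b : K) : Prop :=
  (graph K (eps n m)).Reachable a b

lemma Rel.refl (n m : ℕ) (a : K) : Rel K n m a a := SimpleGraph.Reachable.refl a

lemma Rel.symm' {n m : ℕ} {a b : K} (h : Rel K n m a b) : Rel K n m b a :=
  SimpleGraph.Reachable.symm h

lemma Rel.trans' {n m : ℕ} {a b c : K} (h : Rel K n m a b) (h' : Rel K n m b c) :
    Rel K n m a c := SimpleGraph.Reachable.trans h h'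

lemma Rel.mono {n m m' : ℕ} (hm : m' ≤ m) {a b : K} (h : Rel K n m a b) :
    Rel K n m' a b := by
  apply SimpleGraph.Reachable.mono (G := graph K (eps n m)) (G' := graph K (eps n m'))
  · intro u v huv
    exact ⟨huv.1, le_trans huv.2 (eps_antitone n hm)⟩
  · exact h

lemma walk_dist_le {ε : ℝ} (hε : 0 ≤ ε) {u v : K} (q : (graph K ε).Walk u v) :
    dist u v ≤ q.length * ε := by
  induction q with
  | nil => simp [dist_self]
  | @cons u' v' w' h q ih =>
    calc dist u' w' ≤ dist u' v' + dist v' w' := dist_triangle _ _ _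
      _ ≤ ε + q.length * ε := add_le_add h.2 ih
      _ = (q.cons h).length * ε := by
          rw [SimpleGraph.Walk.length_cons]
          push_cast
          ring

lemma reachable_dist_le {n : ℕ} (hcard : Fintype.card K ≤ n) {ε : ℝ} (hε : 0 ≤ ε)
    {a b : K} (h : (graph K ε).Reachable a b) : dist a b ≤ n * ε := by
  obtain ⟨q⟩ := h
  have hp : q.bypass.IsPath := SimpleGraph.Walk.bypass_isPath q
  have hlen : q.bypass.length < Fintype.card K := hp.length_lt
  calc dist a b ≤ q.bypass.length * ε := walk_dist_le hε q.bypass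
    _ ≤ n * ε := by
        apply mul_le_mul_of_nonneg_right _ hε
        exact_mod_cast le_of_lt (lt_of_lt_of_le hlen hcard)

lemma Rel.dist_le {n m : ℕ} (hcard : Fintype.card K ≤ n) {a b : K} (h : Rel K n m a b) :
    dist a b ≤ n * eps n m :=
  reachable_dist_le hcard (eps_pos n m).le h

/-- the cluster of `a` at scale `m` -/
def ball (n m : ℕ) (a : K) : Finset K :=
  @Finset.filter K (fun b => Rel K n m a b) (Classical.decPred _) Finset.univ

lemma mem_ball {n m : ℕ} {a b : K} : b ∈ ball n m a ↔ Rel K n m a b := by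
  unfold ball
  simp

lemma ball_nonempty (n m : ℕ) (a : K) : (ball n m a).Nonempty :=
  ⟨a, mem_ball.mpr (Rel.refl n m a)⟩

/-- the representative of the cluster of `a` at scale `m` -/
def rep (n m : ℕ) (a : K) : K := (ball n m a).min' (ball_nonempty n m a)

lemma rep_rel (n m : ℕ) (a : K) : Rel K n m a (rep n m a) :=
  mem_ball.mp ((ball n m a).min'_mem (ball_nonempty n m a))

lemma ball_congr {n m : ℕ} {a b : K} (h : Rel K n m a b) : ball n m a = ball n m b := by
  ext c
  rw [mem_ball, mem_ball]
  exact ⟨fun h' => h.symm'.trans' h', fun h' => h.trans' h'⟩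

lemma rep_congr {n m : ℕ} {a b : K} (h : Rel K n m a b) : rep n m a = rep n m b := by
  unfold rep
  congr 1
  exact ball_congr h

end Greedy

end CantorUniv

namespace CantorUniv

section Greedy2

variable {K : Type} [MetricSpace K] [Fintype K] [LinearOrder K]

/-- the greedy walk -/
def Q (n : ℕ) (π : Fin (n+1) → K) : ℕ → K → Fin (n+1) → ℝ
  | 0, _, _ => 0
  | m+1, a, k => Q n π m a k +
      (if Q n π m a k < dist (rep n m a) (π k) then w m else -w m)

/-- the chosen bits -/
def bitv (n : ℕ) (π : Fin (n+1) → K) (m : ℕ) (a : K) (k : Fin (n+1)) : Bool :=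
  decide (Q n π m a k < dist (rep n m a) (π k))

/-- the point of Cantor space associated to `a : K` -/
def xpt (n : ℕ) (π : Fin (n+1) → K) (a : K) : ℕ → Bool :=
  fun p => bitv n π (p / (n+1)) a ⟨p % (n+1), Nat.mod_lt _ (Nat.succ_pos n)⟩

variable {n : ℕ} {π : Fin (n+1) → K}

lemma rep_step_dist (hcard : Fintype.card K ≤ n) (m : ℕ) (a : K) :
    dist (rep n m a) (rep n (m+1) a) ≤ n * eps n m := by
  have h1 : Rel K n m a (rep n m a) := rep_rel n m a
  have h2 : Rel K n m a (rep n (m+1) a) := (rep_rel n (m+1) a).mono (Nat.le_succ m)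
  exact (h1.symm'.trans' h2).dist_le hcard

lemma n_eps_le (n m : ℕ) : (n : ℝ) * eps n m ≤ w m / 4 := by
  unfold eps
  have h2 : ((n:ℝ)+1) * (w m / (4 * ((n:ℝ)+1))) = w m / 4 := by
    field_simp
  calc (n:ℝ) * (w m / (4 * ((n:ℝ)+1))) ≤ ((n:ℝ)+1) * (w m / (4 * ((n:ℝ)+1))) := by
        apply mul_le_mul_of_nonneg_right (by linarith)
        have := w_nonneg m
        positivity
    _ = w m / 4 := h2

lemma Q_inv (hcard : Fintype.card K ≤ n)
    (hv1 : ∀ (a : K) (k : Fin (n+1)), dist a (π k) ≤ 1) :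
    ∀ (m : ℕ) (a : K) (k : Fin (n+1)),
      |Q n π m a k - dist (rep n m a) (π k)| ≤ 3 * w m := by
  intro m
  induction m with
  | zero =>
    intro a k
    have h0 : Q n π 0 a k = 0 := rfl
    rw [h0, zero_sub, abs_neg, abs_of_nonneg dist_nonneg]
    have : w 0 = 1 := by simp [w]
    rw [this]
    linarith [hv1 (rep n 0 a) k]
  | succ m ih =>
    intro a k
    have hQ : Q n π (m+1) a k = Q n π m a k +
        (if Q n π m a k < dist (rep n m a) (π k) then w m else -w m) := rfl
    set q := Q n π m a k with hq
    set t := dist (rep n m a) (π k) with ht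
    set t' := dist (rep n (m+1) a) (π k) with ht'
    have hstep : |Q n π (m+1) a k - t| ≤ 2 * w m := by
      rw [hQ]
      by_cases hc : q < t
      · rw [if_pos hc]
        have := ih a k
        rw [← hq, ← ht] at this
        rw [abs_le] at this ⊢
        constructor <;> [skip; skip] <;> cases this with
        | intro h1 h2 => linarith [w_pos m]
      · rw [if_neg hc]
        push_neg at hc
        have := ih a k
        rw [← hq, ← ht] at this
        rw [abs_le] at this ⊢
        constructor <;> cases this with
        | intro h1 h2 => linarith [w_pos m]
    have hretarget : |t - t'| ≤ w m / 4 := by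
      have h1 : |t - t'| ≤ dist (rep n m a) (rep n (m+1) a) := abs_dist_sub_le _ _ _
      exact le_trans h1 (le_trans (rep_step_dist hcard m a) (n_eps_le n m))
    calc |Q n π (m+1) a k - t'| ≤ |Q n π (m+1) a k - t| + |t - t'| := abs_sub_le _ _ _
      _ ≤ 2 * w m + w m / 4 := add_le_add hstep hretarget
      _ ≤ 3 * w (m+1) := by rw [w_succ]; linarith [w_nonneg m]

lemma Q_dist_le (hcard : Fintype.card K ≤ n)
    (hv1 : ∀ (a : K) (k : Fin (n+1)), dist a (π k) ≤ 1) (m : ℕ) (a : K) (k : Fin (n+1)) :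
    |Q n π m a k - dist a (π k)| ≤ 4 * w m := by
  have h1 := Q_inv hcard hv1 m a k
  have h2 : |dist (rep n m a) (π k) - dist a (π k)| ≤ dist (rep n m a) a :=
    abs_dist_sub_le _ _ _
  have h3 : dist (rep n m a) a ≤ n * eps n m := by
    rw [dist_comm]
    exact (rep_rel n m a).dist_le hcard
  have h4 := n_eps_le n m
  calc |Q n π m a k - dist a (π k)|
      ≤ |Q n π m a k - dist (rep n m a) (π k)| + |dist (rep n m a) (π k) - dist a (π k)| :=
        abs_sub_le _ _ _
    _ ≤ 3 * w m + (w m / 4) := add_le_add h1 (h2.trans (h3.trans h4))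
    _ ≤ 4 * w m := by linarith [w_nonneg m]

lemma partial_sum_eq_Q (a : K) (k : Fin (n+1)) (M : ℕ) :
    ∑ m ∈ Finset.range M, sgn (bitv n π m a k) * w m = Q n π M a k := by
  induction M with
  | zero => rfl
  | succ M ih =>
    rw [Finset.sum_range_succ, ih]
    have : Q n π (M+1) a k = Q n π M a k +
        (if Q n π M a k < dist (rep n M a) (π k) then w M else -w M) := rfl
    rw [this]
    congr 1
    unfold bitv sgn
    by_cases hc : Q n π M a k < dist (rep n M a) (π k)
    · rw [if_pos hc]
      simp [hc]
    · rw [if_neg hc]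
      simp [hc]

lemma dec_bitv (hcard : Fintype.card K ≤ n)
    (hv1 : ∀ (a : K) (k : Fin (n+1)), dist a (π k) ≤ 1) (a : K) (k : Fin (n+1)) :
    dec (fun m => bitv n π m a k) = dist a (π k) := by
  have hs : Summable fun m => sgn (bitv n π m a k) * w m := summable_dec _
  have h1 : Filter.Tendsto (fun M => ∑ m ∈ Finset.range M, sgn (bitv n π m a k) * w m)
      Filter.atTop (nhds (dec (fun m => bitv n π m a k))) := hs.hasSum.tendsto_sum_nat
  have h2 : Filter.Tendsto (fun M => ∑ m ∈ Finset.range M, sgn (bitv n π m a k) * w m)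
      Filter.atTop (nhds (dist a (π k))) := by
    have heq : (fun M => ∑ m ∈ Finset.range M, sgn (bitv n π m a k) * w m)
        = fun M => Q n π M a k := funext fun M => partial_sum_eq_Q a k M
    rw [heq]
    rw [← tendsto_sub_nhds_zero_iff]
    apply squeeze_zero_norm (fun M => Q_dist_le hcard hv1 M a k)
    have : Filter.Tendsto (fun M : ℕ => (4:ℝ) * (3/4)^M) Filter.atTop (nhds (4 * 0)) :=
      (tendsto_pow_atTop_nhds_zero_of_lt_one (by norm_num) (by norm_num)).const_mul 4
    simpa [w] using this
  exact tendsto_nhds_unique h1 h2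

lemma stream_xpt (a : K) (k : Fin (n+1)) :
    stream n k (xpt n π a) = fun m => bitv n π m a k := by
  funext m
  unfold stream xpt
  congr 1
  · rw [Nat.add_mul_div_left _ _ (Nat.succ_pos n), Nat.div_eq_of_lt k.isLt, zero_add]
  · apply Fin.ext
    simp only []
    rw [Nat.add_mul_mod_self_left, Nat.mod_eq_of_lt k.isLt]

end Greedy2

end CantorUniv

namespace CantorUniv

section Greedy3

variable {K : Type} [MetricSpace K] [Fintype K] [LinearOrder K]
variable {n : ℕ} {π : Fin (n+1) → K}

lemma Q_eq_of_rel (a b : K) :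
    ∀ j, (∀ i < j, Rel K n i a b) → ∀ k, Q n π j a k = Q n π j b k := by
  intro j
  induction j with
  | zero => intro _ _; rfl
  | succ j ih =>
    intro h k
    have hQ : Q n π j a k = Q n π j b k := ih (fun i hi => h i (hi.trans (Nat.lt_succ_self j))) k
    have hrep : rep n j a = rep n j b := rep_congr (h j (Nat.lt_succ_self j))
    show Q n π j a k + _ = Q n π j b k + _
    rw [hQ, hrep]

lemma bitv_eq_of_rel (a b : K) (j : ℕ) (h : ∀ i ≤ j, Rel K n i a b) (k : Fin (n+1)) :
    bitv n π j a k = bitv n π j b k := by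
  unfold bitv
  rw [Q_eq_of_rel a b j (fun i hi => h i hi.le) k, rep_congr (h j le_rfl)]

lemma xpt_eq_of_rel (a b : K) (m₀ : ℕ) (h : ∀ i < m₀, Rel K n i a b) :
    ∀ p < (n+1) * m₀, xpt n π a p = xpt n π b p := by
  intro p hp
  have hj : p / (n+1) < m₀ := Nat.div_lt_of_lt_mul (by rw [mul_comm] at hp ⊢; exact hp)
  unfold xpt
  apply bitv_eq_of_rel
  intro i hi
  exact h i (lt_of_le_of_lt hi hj)

lemma exists_not_rel (hcard : Fintype.card K ≤ n) {a b : K} (hab : a ≠ b) :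
    ∃ m, ¬ Rel K n m a b := by
  obtain ⟨m, hm⟩ := exists_pow_lt_of_lt_one (dist_pos.mpr hab) (by norm_num : (3:ℝ)/4 < 1)
  refine ⟨m, fun hR => ?_⟩
  have h1 : dist a b ≤ n * eps n m := hR.dist_le hcard
  have h2 := n_eps_le n m
  have h3 : w m / 4 < dist a b := by
    have hw : w m = (3/4:ℝ)^m := rfl
    have := w_pos m
    rw [hw] at *
    linarith
  linarith

/-- the key estimate : the `cfun`-coordinates of two embedded points are close -/
lemma cfun_xpt_le (hcard : Fintype.card K ≤ n) {a b : K} (hab : a ≠ b) :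
    (1/(4*((n:ℝ)+1))) * |cfun (xpt n π a) - cfun (xpt n π b)| ≤ dist a b := by
  classical
  have hex := exists_not_rel (n := n) hcard hab
  set m₀ := Nat.find hex with hm₀def
  have h1 : ¬ Rel K n m₀ a b := Nat.find_spec hex
  have h2 : ∀ i < m₀, Rel K n i a b := fun i hi => not_not.mp (Nat.find_min hex hi)
  -- distance lower bound
  have hdlb : eps n m₀ ≤ dist a b := by
    by_contra hcon
    push_neg at hcon
    exact h1 (SimpleGraph.Adj.reachable (G := graph K (eps n m₀)) ⟨hab, hcon.le⟩)
  -- cfun upper bound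
  have hcub : |cfun (xpt n π a) - cfun (xpt n π b)| ≤ (1/3 : ℝ) ^ ((n+1) * m₀) :=
    cfun_sub_le _ _ _ (fun p hp => xpt_eq_of_rel a b m₀ h2 p hp)
  have hpow : ((1:ℝ)/3) ^ ((n+1) * m₀) ≤ (3/4 : ℝ) ^ m₀ := by
    calc ((1:ℝ)/3) ^ ((n+1) * m₀) ≤ ((1:ℝ)/3) ^ m₀ :=
          pow_le_pow_of_le_one (by norm_num) (by norm_num)
            (Nat.le_mul_of_pos_left m₀ (Nat.succ_pos n))
      _ ≤ (3/4 : ℝ) ^ m₀ := pow_le_pow_left₀ (by norm_num) (by norm_num) m₀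
  calc (1/(4*((n:ℝ)+1))) * |cfun (xpt n π a) - cfun (xpt n π b)|
      ≤ (1/(4*((n:ℝ)+1))) * (3/4 : ℝ) ^ m₀ := by
        apply mul_le_mul_of_nonneg_left (le_trans hcub hpow) (by positivity)
    _ = eps n m₀ := by
        unfold eps w
        field_simp
    _ ≤ dist a b := hdlb

end Greedy3

end CantorUniv

open CantorUniv in
/-- For each natural number `n`, there exists a metric space `C` homeomorphic to the
Cantor space `ℕ → Bool` such that every metric space with at most `n` points and
diameter at most `1` admits an isometric embedding into `C`. -/
theorem cantor_isometrically_universal_for_small_spaces (n : ℕ) :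
    ∃ (C : Type) (_ : MetricSpace C),
      Nonempty (C ≃ₜ (ℕ → Bool)) ∧
      ∀ (K : Type) (_ : MetricSpace K),
        Finite K → Nat.card K ≤ n → Metric.diam (Set.univ : Set K) ≤ 1 →
          ∃ i : K → C, Isometry i := by
  classical
  refine ⟨↥(Set.range (hmap n)), inferInstance, ⟨(hmapHomeo n).symm⟩, ?_⟩
  intro K _inst hfin hcard hdiam
  cases isEmpty_or_nonempty K with
  | inl h => exact ⟨fun a => isEmptyElim a, fun a => isEmptyElim a⟩
  | inr h =>
    letI : Fintype K := Fintype.ofFinite K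
    let e : K ≃ Fin (Fintype.card K) := Fintype.equivFin K
    letI : LinearOrder K := LinearOrder.lift' e e.injective
    have hcard' : Fintype.card K ≤ n := by
      rw [← Nat.card_eq_fintype_card]; exact hcard
    have hpos : 0 < Fintype.card K := Fintype.card_pos
    let π : Fin (n+1) → K := fun j => e.symm ⟨min j.val (Fintype.card K - 1),
      lt_of_le_of_lt (min_le_right _ _) (Nat.pred_lt hpos.ne')⟩
    have hπsurj : ∀ b : K, ∃ k : Fin (n+1), π k = b := by
      intro b
      refine ⟨⟨(e b).val, lt_of_lt_of_le (e b).isLt (le_trans hcard' (Nat.le_succ n))⟩, ?_⟩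
      have hmin : min (e b).val (Fintype.card K - 1) = (e b).val :=
        min_eq_left (Nat.le_pred_of_lt (e b).isLt)
      apply e.injective
      show e (e.symm _) = e b
      rw [Equiv.apply_symm_apply]
      apply Fin.ext
      simpa using hmin
    have hv1 : ∀ (a : K) (k : Fin (n+1)), dist a (π k) ≤ 1 := fun a k =>
      le_trans (Metric.dist_le_diam_of_mem Set.finite_univ.isBounded trivial trivial) hdiam
    refine ⟨fun a => ⟨hmap n (xpt n π a), Set.mem_range_self _⟩, Isometry.of_dist_eq ?_⟩
    intro a b
    rw [Subtype.dist_eq]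
    show dist (hmap n (xpt n π a)) (hmap n (xpt n π b)) = dist a b
    by_cases hab : a = b
    · subst hab
      simp [dist_self]
    · rw [Prod.dist_eq]
      have hfsta : (hmap n (xpt n π a)).1 = fun k => dist a (π k) := by
        funext k
        show dec (stream n k (xpt n π a)) = dist a (π k)
        rw [stream_xpt]
        exact dec_bitv hcard' hv1 a k
      have hfstb : (hmap n (xpt n π b)).1 = fun k => dist b (π k) := by
        funext k
        show dec (stream n k (xpt n π b)) = dist b (π k)
        rw [stream_xpt]
        exact dec_bitv hcard' hv1 b k
      have hfst : dist (hmap n (xpt n π a)).1 (hmap n (xpt n π b)).1 = dist a b := by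
        rw [hfsta, hfstb]
        apply le_antisymm
        · rw [dist_pi_le_iff dist_nonneg]
          intro k
          rw [Real.dist_eq]
          exact abs_dist_sub_le a b (π k)
        · obtain ⟨k₀, hk₀⟩ := hπsurj b
          have := dist_le_pi_dist (fun k => dist a (π k)) (fun k => dist b (π k)) k₀
          rw [Real.dist_eq, hk₀] at this
          simpa [dist_self, abs_of_nonneg dist_nonneg] using this
      have hsnd : dist (hmap n (xpt n π a)).2 (hmap n (xpt n π b)).2 ≤ dist a b := by
        show dist ((1/(4*((n:ℝ)+1))) * cfun (xpt n π a)) ((1/(4*((n:ℝ)+1))) * cfun (xpt n π b))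
          ≤ dist a b
        rw [Real.dist_eq, ← mul_sub, abs_mul, abs_of_nonneg (by positivity : (0:ℝ) ≤ 1/(4*((n:ℝ)+1)))]
        exact cfun_xpt_le hcard' hab
      rw [hfst]
      exact max_eq_left (hfst ▸ hsnd)
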